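/- For a fusion frame sequence W = ((W_i, c_i))_{i∈I}, the canonical dual of the associated operator-valued frame sequence (c_i P_{W_i})_{i∈I} corresponds again to a fusion frame sequence if and only if W is a union of mutually orthogonal tight fusion frame sequences, i.e., there is a partition I = ⋃_j I_j such that each ((W_i, c_i))_{i∈I_j} is a tight fusion frame sequence and the spans of the families for different j are mutually orthogonal. -/

import Mathlib

open ContinuousLinearMap

/-- The orthogonal projection of `H` onto a complete subspace `W`, viewed as an
operator `H →L[ℂ] H`. -/
noncomputable def proj {H : Type*} [NormedAddCommGroup H] [InnerProductSpace ℂ H]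
    (W : Submodule ℂ H) [CompleteSpace W] : H →L[ℂ] H :=
  W.subtypeL.comp (Submodule.orthogonalProjection W)

section aux
variable {H : Type*} [NormedAddCommGroup H] [InnerProductSpace ℂ H]

local notation "⟪" x ", " y "⟫" => @inner ℂ _ _ x y

lemma proj_mem (W : Submodule ℂ H) [CompleteSpace W] (x : H) : proj W x ∈ W :=
  Submodule.coe_mem (Submodule.orthogonalProjection W x)

lemma proj_eq_self {W : Submodule ℂ H} [CompleteSpace W] {x : H} (hx : x ∈ W) :
    proj W x = x := by
  exact Submodule.starProjection_eq_self_iff.2 hx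

lemma proj_eq_zero {W : Submodule ℂ H} [CompleteSpace W] {x : H} (hx : x ∈ Wᗮ) :
    proj W x = 0 := by
  show ((Submodule.orthogonalProjectionOnto W x : W) : H) = 0
  rw [Submodule.orthogonalProjectionOnto_apply_of_mem_orthogonal hx]
  rfl

lemma proj_inner (W : Submodule ℂ H) [CompleteSpace W] (x y : H) :
    ⟪proj W x, y⟫ = ⟪x, proj W y⟫ :=
  Submodule.inner_starProjection_left_eq_right (K := W) x y

lemma proj_idem (W : Submodule ℂ H) [CompleteSpace W] : IsIdempotentElem (proj W) := by
  ext x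
  rw [ContinuousLinearMap.mul_apply]
  exact proj_eq_self (proj_mem W x)

lemma inner_proj_self (W : Submodule ℂ H) [CompleteSpace W] (x : H) :
    ⟪x, proj W x⟫ = ((‖proj W x‖ ^ 2 : ℝ) : ℂ) := by
  have h1 : proj W (proj W x) = proj W x := proj_eq_self (proj_mem W x)
  rw [← h1, ← proj_inner, h1, inner_self_eq_norm_sq_to_K]
  norm_cast

lemma proj_sa (W : Submodule ℂ H) [CompleteSpace H] [CompleteSpace W] :
    IsSelfAdjoint (proj W) := isSelfAdjoint_starProjection W

end aux

section aux2
variable {H : Type*} [NormedAddCommGroup H] [InnerProductSpace ℂ H]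

lemma star_ofReal (r : ℝ) : star ((r : ℂ)) = (r : ℂ) := Complex.conj_ofReal r

lemma sub_proj_mem (W : Submodule ℂ H) [CompleteSpace W] (x : H) : x - proj W x ∈ Wᗮ :=
  Submodule.sub_starProjection_mem_orthogonal (K := W) x

end aux2

set_option maxHeartbeats 2000000 in
/-- For a fusion frame sequence `W = ((Wᵢ, cᵢ))`, the canonical dual of the associated
operator-valued frame sequence `(cᵢ P_{Wᵢ})` — namely `(cᵢ P_{Wᵢ} (S_W|H_W)⁻¹ P_W)ᵢ`,
where `G = (S_W|H_W)⁻¹ P_W` — corresponds again to a fusion frame sequence (each member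
is a non-negative multiple of an orthogonal projection) if and only if `W` is a union of
mutually orthogonal tight fusion frame sequences. -/
theorem canonical_dual_fusion_iff {H : Type*}
    [NormedAddCommGroup H] [InnerProductSpace ℂ H] [CompleteSpace H]
    {I : Type*} [Countable I]
    (W : I → Submodule ℂ H) [∀ i, CompleteSpace (W i)]
    (c : I → ℝ) (hc0 : ∀ i, 0 ≤ c i) (hc : ∀ i, c i = 0 ↔ W i = ⊥)
    (HW : Submodule ℂ H) [CompleteSpace HW]
    (hHW : HW = (⨆ i, W i).topologicalClosure)
    (α β : ℝ) (hα : 0 < α) (hβ : 0 < β)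
    (hsum : ∀ x : H, Summable fun i => (c i) ^ 2 * ‖proj (W i) x‖ ^ 2)
    (hframe : ∀ x ∈ HW,
      α * ‖x‖ ^ 2 ≤ ∑' i, (c i) ^ 2 * ‖proj (W i) x‖ ^ 2 ∧
      ∑' i, (c i) ^ 2 * ‖proj (W i) x‖ ^ 2 ≤ β * ‖x‖ ^ 2)
    (S : H →L[ℂ] H)
    (hS : ∀ x : H, HasSum (fun i => (((c i) ^ 2 : ℝ) : ℂ) • proj (W i) x) (S x))
    (G : H →L[ℂ] H)
    (hGran : ∀ x : H, G x ∈ HW)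
    (hGinv : ∀ x : H, S (G x) = proj HW x)
    (hGker : ∀ x ∈ HWᗮ, G x = 0) :
    (∀ i, ∃ d : ℝ, 0 ≤ d ∧ ∃ P : H →L[ℂ] H, IsIdempotentElem P ∧ IsSelfAdjoint P ∧
        ((c i : ℝ) : ℂ) • ((proj (W i)).comp G) = (d : ℂ) • P) ↔
    (∃ (J : Type) (parts : J → Set I),
      (Pairwise fun j k => Disjoint (parts j) (parts k)) ∧
      (⋃ j, parts j) = Set.univ ∧
      (∀ j k, j ≠ k →
        (⨆ i ∈ parts j, W i).topologicalClosure ≤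
          ((⨆ i ∈ parts k, W i).topologicalClosure)ᗮ) ∧
      ∀ j, ∃ αj > 0, ∀ x ∈ (⨆ i ∈ parts j, W i).topologicalClosure,
        ∑' i : parts j, (c i.1) ^ 2 * ‖proj (W i.1) x‖ ^ 2 = αj * ‖x‖ ^ 2) := by
  classical
  have hWle : ∀ i, W i ≤ HW := fun i =>
    hHW ▸ le_trans (le_iSup W i) (Submodule.le_topologicalClosure _)
  have hHWclosed : IsClosed (HW : Set H) :=
    (completeSpace_coe_iff_isComplete.mp ‹_›).isClosed
  -- quadratic form identity
  have hQF : ∀ x : H, (inner ℂ x (S x) : ℂ)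
      = ((∑' i, (c i) ^ 2 * ‖proj (W i) x‖ ^ 2 : ℝ) : ℂ) := by
    intro x
    have h1 := (hS x).mapL (innerSL ℂ x)
    have h2 : ∀ i, (inner ℂ x ((((c i) ^ 2 : ℝ) : ℂ) • proj (W i) x) : ℂ)
        = (((c i) ^ 2 * ‖proj (W i) x‖ ^ 2 : ℝ) : ℂ) := by
      intro i
      rw [inner_smul_right, inner_proj_self]
      push_cast; ring
    have h3 : HasSum (fun i => (((c i) ^ 2 * ‖proj (W i) x‖ ^ 2 : ℝ) : ℂ)) (inner ℂ x (S x)) := by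
      simpa only [innerSL_apply_apply, h2] using h1
    have h4 := ((hsum x).hasSum).mapL Complex.ofRealCLM
    exact h3.unique h4
  -- S is symmetric
  have hSsa : ∀ x y : H, (inner ℂ (S x) y : ℂ) = inner ℂ x (S y) := by
    intro x y
    have h1 := (hS x).mapL (innerSL ℂ y)
    have h1' : HasSum (fun i => (starRingEnd ℂ) (inner ℂ y ((((c i) ^ 2 : ℝ) : ℂ) • proj (W i) x)))
        ((starRingEnd ℂ) (inner ℂ y (S x))) :=
      h1.map (starRingEnd ℂ).toAddMonoidHom (RCLike.continuous_conj)
    have h2 := (hS y).mapL (innerSL ℂ x)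
    have hterm : ∀ i, (starRingEnd ℂ) (inner ℂ y ((((c i) ^ 2 : ℝ) : ℂ) • proj (W i) x))
        = (inner ℂ x ((((c i) ^ 2 : ℝ) : ℂ) • proj (W i) y) : ℂ) := by
      intro i
      rw [inner_smul_right, map_mul, ← inner_conj_symm, Complex.conj_conj,
        inner_smul_right, proj_inner]
      simp [Complex.conj_ofReal]
    rw [← inner_conj_symm]
    have h1'' : HasSum (fun i => (inner ℂ x ((((c i) ^ 2 : ℝ) : ℂ) • proj (W i) y) : ℂ))
        ((starRingEnd ℂ) (inner ℂ y (S x))) := by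
      simpa only [hterm] using h1'
    refine h1''.unique ?_
    simpa only [innerSL_apply_apply, inner_smul_right] using h2
  -- S maps into HW
  have hSmem : ∀ x : H, S x ∈ HW := by
    intro x
    refine hHWclosed.mem_of_tendsto (hS x) (Filter.Eventually.of_forall fun s => ?_)
    exact Submodule.sum_mem _ fun i _ => Submodule.smul_mem _ _ (hWle i (proj_mem _ x))
  -- injectivity facts
  have hGinj : ∀ x ∈ HW, G x = 0 → x = 0 := by
    intro x hx h
    have := hGinv x
    rw [h, map_zero] at this
    rw [← proj_eq_self hx, ← this]
  have hSinj : ∀ x ∈ HW, S x = 0 → x = 0 := by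
    intro x hx h
    have h0 : ((∑' i, (c i) ^ 2 * ‖proj (W i) x‖ ^ 2 : ℝ) : ℂ) = 0 := by
      rw [← hQF x, h, inner_zero_right]
    have h1 : (∑' i, (c i) ^ 2 * ‖proj (W i) x‖ ^ 2 : ℝ) = 0 := by exact_mod_cast h0
    have h2 := (hframe x hx).1
    rw [h1] at h2
    have hx2 : ‖x‖ ^ 2 ≤ 0 := nonpos_of_mul_nonpos_right h2 hα
    have : ‖x‖ = 0 := by nlinarith [norm_nonneg x, sq_nonneg ‖x‖]
    exact norm_eq_zero.mp this
  have hG0 : ∀ x : H, G x = G (proj HW x) := by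
    intro x
    have h := hGker _ (sub_proj_mem HW x)
    rw [map_sub, sub_eq_zero] at h
    exact h
  have hGsaHW : ∀ u ∈ HW, ∀ v ∈ HW, (inner ℂ (G u) v : ℂ) = inner ℂ u (G v) := by
    intro u hu v hv
    calc (inner ℂ (G u) v : ℂ) = inner ℂ (G u) (S (G v)) := by rw [hGinv v, proj_eq_self hv]
    _ = inner ℂ (S (G u)) (G v) := (hSsa _ _).symm
    _ = inner ℂ u (G v) := by rw [hGinv u, proj_eq_self hu]
  have hGsa : ∀ x y : H, (inner ℂ (G x) y : ℂ) = inner ℂ x (G y) := by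
    intro x y
    rw [hG0 x, hG0 y]
    have h1 : (inner ℂ (G (proj HW x)) (y - proj HW y) : ℂ) = 0 :=
      Submodule.inner_right_of_mem_orthogonal (hGran (proj HW x)) (sub_proj_mem HW y)
    have h2 : (inner ℂ (x - proj HW x) (G (proj HW y)) : ℂ) = 0 :=
      Submodule.inner_left_of_mem_orthogonal (hGran (proj HW y)) (sub_proj_mem HW x)
    rw [inner_sub_right, sub_eq_zero] at h1
    rw [inner_sub_left, sub_eq_zero] at h2
    rw [h1, hGsaHW _ (proj_mem HW x) _ (proj_mem HW y), ← h2]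
  have hGsaOp : IsSelfAdjoint G :=
    ContinuousLinearMap.isSelfAdjoint_iff_isSymmetric.mpr (fun x y => hGsa x y)
  constructor
  · -- forward direction
    intro hdual
    have hkey : ∀ i, ∃ μ : ℝ, 0 < μ ∧ ∀ x ∈ W i, S x = ((μ : ℝ) : ℂ) • x := by
      intro i
      by_cases hb : W i = ⊥
      · refine ⟨1, one_pos, fun x hx => ?_⟩
        rw [hb, Submodule.mem_bot] at hx
        simp [hx]
      · obtain ⟨d, hd0, P, hPidem, hPsa, hPeq⟩ := hdual i
        have hci : 0 < c i := lt_of_le_of_ne (hc0 i) (fun h => hb ((hc i).1 h.symm))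
        set A : H →L[ℂ] H := (_root_.proj (W i)).comp G with hA
        have hsmul : IsSelfAdjoint (((c i : ℝ) : ℂ) • A) := by
          rw [hPeq]
          exact IsSelfAdjoint.smul (star_ofReal d) hPsa
        have hAsa : IsSelfAdjoint A := by
          have h2 := IsSelfAdjoint.smul
            (x := ((c i : ℝ) : ℂ) • A) (r := (((c i)⁻¹ : ℝ) : ℂ))
            (star_ofReal _) hsmul
          rwa [smul_smul, ← Complex.ofReal_mul, inv_mul_cancel₀ (ne_of_gt hci),
            Complex.ofReal_one, one_smul] at h2
        have hcomm : G.comp (proj (W i)) = A := by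
          conv_rhs => rw [← hAsa.adjoint_eq]
          rw [hA, adjoint_comp, hGsaOp.adjoint_eq, (proj_sa (W i)).adjoint_eq]
        have hcne : ((c i : ℝ) : ℂ) ≠ 0 := Complex.ofReal_ne_zero.mpr (ne_of_gt hci)
        have hA2 : A * A = ((d / c i : ℝ) : ℂ) • A := by
          have h1 : ((((c i : ℝ) : ℂ)) * ((c i : ℝ) : ℂ)) • (A * A)
              = ((((d : ℝ) : ℂ)) * ((d : ℝ) : ℂ)) • (P * P) := by
            rw [← smul_mul_smul_comm, ← smul_mul_smul_comm, hPeq]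
          rw [hPidem.eq] at h1
          have h2 : ((((d : ℝ) : ℂ)) * ((d : ℝ) : ℂ)) • P
              = ((((c i : ℝ) : ℂ)) * ((c i : ℝ) : ℂ)) • (((d / c i : ℝ) : ℂ) • A) := by
            rw [← smul_smul ((d : ℝ) : ℂ) ((d : ℝ) : ℂ), ← hPeq, smul_smul, smul_smul]
            congr 1
            push_cast
            field_simp
          rw [h2] at h1
          exact smul_right_injective (H →L[ℂ] H) (mul_ne_zero hcne hcne) h1
        have hm : ∀ y ∈ W i, A y = G y ∧ G y ∈ W i := by
          intro y hy
          have h1 : A y = G y := by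
            rw [← hcomm]
            simp only [ContinuousLinearMap.comp_apply]
            rw [proj_eq_self hy]
          have h2 : G y ∈ W i := by
            have : A y = proj (W i) (G y) := rfl
            rw [h1] at this
            rw [this]
            exact proj_mem _ _
          exact ⟨h1, h2⟩
        set lam : ℝ := d / c i with hlam
        have hGlam : ∀ x ∈ W i, G x = ((lam : ℝ) : ℂ) • x := by
          intro x hx
          have hG2 : G (G x) = ((lam : ℝ) : ℂ) • G x := by
            have h1 := congrArg (fun T : H →L[ℂ] H => T x) hA2
            simp only [ContinuousLinearMap.mul_apply, ContinuousLinearMap.smul_apply] at h1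
            rwa [(hm x hx).1, (hm _ (hm x hx).2).1] at h1
          have hz : G (G x - ((lam : ℝ) : ℂ) • x) = 0 := by
            rw [map_sub, map_smul, hG2, sub_self]
          have hzHW : G x - ((lam : ℝ) : ℂ) • x ∈ HW :=
            Submodule.sub_mem _ (hGran x) (Submodule.smul_mem _ _ (hWle i hx))
          exact sub_eq_zero.mp (hGinj _ hzHW hz)
        have hlam0 : 0 ≤ lam := div_nonneg hd0 (le_of_lt hci)
        have hlampos : 0 < lam := by
          rcases hlam0.lt_or_eq with h | h
          · exact h
          · exfalso
            obtain ⟨x0, hx0, hx0ne⟩ := Submodule.exists_mem_ne_zero_of_ne_bot hb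
            have hg := hGlam x0 hx0
            rw [← h] at hg
            simp only [Complex.ofReal_zero, zero_smul] at hg
            exact hx0ne (hGinj x0 (hWle i hx0) hg)
        refine ⟨lam⁻¹, inv_pos.mpr hlampos, fun x hx => ?_⟩
        have h1 : S (G x) = x := by rw [hGinv, proj_eq_self (hWle i hx)]
        rw [hGlam x hx, map_smul] at h1
        have h2 := congrArg (fun v => (((lam⁻¹ : ℝ)) : ℂ) • v) h1
        simp only [smul_smul] at h2
        rw [← Complex.ofReal_mul, inv_mul_cancel₀ (ne_of_gt hlampos),
          Complex.ofReal_one, one_smul] at h2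
        exact h2
    choose μ hμpos hμeig using hkey
    -- orthogonality of distinct eigenvectors
    have horth : ∀ (s t : ℝ), s ≠ t → ∀ x y : H, S x = ((s : ℝ) : ℂ) • x →
        S y = ((t : ℝ) : ℂ) • y → (inner ℂ x y : ℂ) = 0 := by
      intro s t hst x y hx hy
      have h := hSsa x y
      rw [hx, hy, inner_smul_left, inner_smul_right, Complex.conj_ofReal] at h
      have h2 : (((s : ℂ)) - t) * inner ℂ x y = 0 := by
        rw [sub_mul, h, sub_self]
      rcases mul_eq_zero.mp h2 with h' | h'
      · exact absurd (Complex.ofReal_inj.mp (sub_eq_zero.mp h')) hst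
      · exact h'
    -- closures of parts lie in eigenspaces
    have hEig : ∀ t : ℝ, ∀ x ∈ (⨆ i ∈ {i | μ i = t}, W i).topologicalClosure,
        S x = ((t : ℝ) : ℂ) • x := by
      intro t x hx
      have hker : (⨆ i ∈ {i | μ i = t}, W i).topologicalClosure ≤
          LinearMap.ker (((S - ((t : ℝ) : ℂ) • (1 : H →L[ℂ] H)) : H →L[ℂ] H) : H →ₗ[ℂ] H) := by
        apply Submodule.topologicalClosure_minimal
        · refine iSup₂_le fun i hi x hx => ?_
          rw [LinearMap.mem_ker]
          have := hμeig i x hx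
          rw [Set.mem_setOf_eq] at hi
          simp only [ContinuousLinearMap.coe_sub', Pi.sub_apply,
            ContinuousLinearMap.coe_smul', Pi.smul_apply, ContinuousLinearMap.one_apply,
            ContinuousLinearMap.coe_coe]
          rw [this, hi, sub_self]
        · exact ContinuousLinearMap.isClosed_ker _
      have := hker hx
      rw [LinearMap.mem_ker] at this
      have h2 : S x - ((t : ℝ) : ℂ) • x = 0 := by
        simpa using this
      exact sub_eq_zero.mp h2
    refine ⟨ℝ, fun t => {i | μ i = t}, ?_, ?_, ?_, ?_⟩
    · intro s t hst
      rw [Set.disjoint_left]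
      rintro i (hi : μ i = s) (hi' : μ i = t)
      exact hst (hi ▸ hi')
    · ext i
      simp only [Set.mem_iUnion, Set.mem_setOf_eq, Set.mem_univ, iff_true]
      exact ⟨μ i, rfl⟩
    · intro s t hst x hx
      rw [Submodule.mem_orthogonal]
      intro u hu
      exact horth t s (fun h => hst h.symm) u x (hEig t u hu) (hEig s x hx)
    · intro t
      by_cases hne : ∃ i, μ i = t
      · obtain ⟨i0, hi0⟩ := hne
        refine ⟨t, hi0 ▸ hμpos i0, fun x hx => ?_⟩
        have hSx := hEig t x hx
        have hoff : ∀ k, k ∉ {i | μ i = t} → (c k) ^ 2 * ‖proj (W k) x‖ ^ 2 = 0 := by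
          intro k hk
          by_cases hbk : W k = ⊥
          · rw [(hc k).2 hbk]
            simp
          · have hxo : x ∈ (W k)ᗮ := by
              rw [Submodule.mem_orthogonal]
              intro u hu
              exact horth (μ k) t hk u x (hμeig k u hu) hSx
            rw [proj_eq_zero hxo]
            simp
        have hsub : (∑' i : {i | μ i = t}, (c i.1) ^ 2 * ‖proj (W i.1) x‖ ^ 2)
            = ∑' i, (c i) ^ 2 * ‖proj (W i) x‖ ^ 2 := by
          apply tsum_subtype_eq_of_support_subset
            (f := fun k => (c k) ^ 2 * ‖proj (W k) x‖ ^ 2)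
          intro k hk
          by_contra hk'
          exact hk (hoff k hk')
        have hfull : ((∑' i, (c i) ^ 2 * ‖proj (W i) x‖ ^ 2 : ℝ) : ℂ)
            = ((t * ‖x‖ ^ 2 : ℝ) : ℂ) := by
          rw [← hQF x, hSx, inner_smul_right, inner_self_eq_norm_sq_to_K]
          rw [Complex.ofReal_mul]
          norm_cast
          simp [RCLike.ofReal_alg]
        rw [hsub]
        exact_mod_cast hfull
      · push_neg at hne
        refine ⟨1, one_pos, fun x hx => ?_⟩
        have hbotsup : (⨆ i ∈ {i | μ i = t}, W i) = ⊥ := by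
          refine le_antisymm (iSup₂_le fun i hi => absurd hi (by exact hne i)) bot_le
        have hxbot : x = 0 := by
          rw [hbotsup] at hx
          have hcl : (⊥ : Submodule ℂ H).topologicalClosure ≤ ⊥ := by
            apply Submodule.topologicalClosure_minimal _ le_rfl
            rw [Submodule.bot_coe]
            exact isClosed_singleton
          simpa using hcl hx
        subst hxbot
        simp
  · rintro ⟨J, parts, hdis, hcov, horthJ, htight⟩ i
    by_cases hci : c i = 0
    · refine ⟨0, le_rfl, 0, ?_, IsSelfAdjoint.zero _, ?_⟩
      · simp [IsIdempotentElem]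
      · rw [hci]
        simp
    · have hib : W i ≠ ⊥ := fun h => hci ((hc i).2 h)
      have hcipos : 0 < c i := lt_of_le_of_ne (hc0 i) (Ne.symm hci)
      obtain ⟨j, hj⟩ : ∃ j, i ∈ parts j := by
        have h1 : i ∈ ⋃ j, parts j := by rw [hcov]; trivial
        exact Set.mem_iUnion.mp h1
      obtain ⟨Hj, hHj⟩ : ∃ Hj' : Submodule ℂ H,
          Hj' = (⨆ k ∈ parts j, W k).topologicalClosure := ⟨_, rfl⟩
      have hHjclosed : IsClosed (Hj : Set H) := by
        rw [hHj]
        exact Submodule.isClosed_topologicalClosure _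
      haveI : CompleteSpace Hj := hHjclosed.completeSpace_coe
      obtain ⟨aj, haj, heq0⟩ := htight j
      have heq : ∀ x ∈ Hj,
          (∑' k : parts j, (c k.1) ^ 2 * ‖proj (W k.1) x‖ ^ 2) = aj * ‖x‖ ^ 2 :=
        fun x hx => heq0 x (hHj ▸ hx)
      have hWHj : ∀ k ∈ parts j, W k ≤ Hj := by
        intro k hk
        rw [hHj]
        exact le_trans (le_iSup₂ (f := fun k _ => W k) k hk)
          (Submodule.le_topologicalClosure _)
      have hHjHW : Hj ≤ HW := by
        rw [hHj, hHW]
        exact Submodule.topologicalClosure_mono (iSup₂_le fun k _ => le_iSup W k)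
      have hoff : ∀ x ∈ Hj, ∀ k, k ∉ parts j → proj (W k) x = 0 := by
        intro x hx k hk
        obtain ⟨j', hj'⟩ : ∃ j', k ∈ parts j' := by
          have h1 : k ∈ ⋃ j, parts j := by rw [hcov]; trivial
          exact Set.mem_iUnion.mp h1
        have hjj' : j ≠ j' := fun h => hk (h ▸ hj')
        apply proj_eq_zero
        have hx' : x ∈ ((⨆ i ∈ parts j', W i).topologicalClosure)ᗮ :=
          horthJ j j' hjj' (hHj ▸ hx)
        exact Submodule.orthogonal_le
          (le_trans (le_iSup₂ (f := fun k _ => W k) k hj') (Submodule.le_topologicalClosure _))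
          hx'
      have hquad : ∀ x ∈ Hj, (inner ℂ x (S x) : ℂ) = ((aj * ‖x‖ ^ 2 : ℝ) : ℂ) := by
        intro x hx
        rw [hQF x]
        norm_cast
        rw [← heq x hx]
        symm
        apply tsum_subtype_eq_of_support_subset
          (f := fun k => (c k) ^ 2 * ‖proj (W k) x‖ ^ 2)
        intro k hk
        by_contra hk'
        rw [Function.mem_support] at hk
        apply hk
        rw [hoff x hx k hk']
        simp
      have hSHj : ∀ x ∈ Hj, S x ∈ Hj := by
        intro x hx
        refine hHjclosed.mem_of_tendsto (hS x)
          (Filter.Eventually.of_forall fun s => ?_)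
        refine Submodule.sum_mem _ fun k _ => ?_
        by_cases hk : k ∈ parts j
        · exact Submodule.smul_mem _ _ (hWHj k hk (proj_mem _ x))
        · rw [hoff x hx k hk, smul_zero]
          exact Submodule.zero_mem _
      have hSeig : ∀ x ∈ Hj, S x = ((aj : ℝ) : ℂ) • x := by
        obtain ⟨T, hT⟩ : ∃ T : H →L[ℂ] H,
            T = (_root_.proj Hj).comp ((S - ((aj : ℝ) : ℂ) • 1).comp (_root_.proj Hj)) :=
          ⟨_, rfl⟩
        have hTz : ∀ x : H, (inner ℂ (T x) x : ℂ) = 0 := by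
          intro x
          rw [hT]
          simp only [ContinuousLinearMap.comp_apply]
          rw [proj_inner]
          have hy : proj Hj x ∈ Hj := proj_mem _ _
          simp only [ContinuousLinearMap.sub_apply, ContinuousLinearMap.smul_apply,
            ContinuousLinearMap.one_apply]
          rw [inner_sub_left, inner_smul_left]
          have h1 : (inner ℂ (S (proj Hj x)) (proj Hj x) : ℂ)
              = ((aj * ‖proj Hj x‖ ^ 2 : ℝ) : ℂ) := by
            rw [← inner_conj_symm, hquad _ hy, Complex.conj_ofReal]
          rw [h1, inner_self_eq_norm_sq_to_K, Complex.conj_ofReal, Complex.ofReal_mul]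
          push_cast
          ring_nf
          simp [RCLike.ofReal_alg]
        have hT0 : T = 0 := by
          have h2 := (inner_map_self_eq_zero (T : H →ₗ[ℂ] H)).mp (fun x => hTz x)
          exact ContinuousLinearMap.coe_injective
            (by rw [h2, ContinuousLinearMap.coe_zero])
        intro x hx
        have h2 : T x = 0 := by rw [hT0]; exact ContinuousLinearMap.zero_apply x
        rw [hT] at h2
        simp only [ContinuousLinearMap.comp_apply] at h2
        rw [proj_eq_self hx] at h2
        have hmem : (S - ((aj : ℝ) : ℂ) • 1) x ∈ Hj := by
          simp only [ContinuousLinearMap.sub_apply, ContinuousLinearMap.smul_apply,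
            ContinuousLinearMap.one_apply]
          exact Submodule.sub_mem _ (hSHj x hx) (Submodule.smul_mem _ _ hx)
        rw [proj_eq_self hmem] at h2
        simp only [ContinuousLinearMap.sub_apply, ContinuousLinearMap.smul_apply,
          ContinuousLinearMap.one_apply] at h2
        exact sub_eq_zero.mp h2
      have hGeig : ∀ x ∈ Hj, G x = (((aj⁻¹ : ℝ)) : ℂ) • x := by
        intro x hx
        have hz : S (G x - ((aj⁻¹ : ℝ) : ℂ) • x) = 0 := by
          rw [map_sub, map_smul, hGinv, proj_eq_self (hHjHW hx), hSeig x hx, smul_smul,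
            ← Complex.ofReal_mul, inv_mul_cancel₀ (ne_of_gt haj), Complex.ofReal_one,
            one_smul, sub_self]
        have hmem : G x - ((aj⁻¹ : ℝ) : ℂ) • x ∈ HW :=
          Submodule.sub_mem _ (hGran x) (Submodule.smul_mem _ _ (hHjHW hx))
        exact sub_eq_zero.mp (hSinj _ hmem hz)
      refine ⟨c i / aj, le_of_lt (div_pos hcipos haj), proj (W i), proj_idem _,
        proj_sa _, ?_⟩
      ext x
      simp only [ContinuousLinearMap.smul_apply, ContinuousLinearMap.comp_apply]
      have hWiHj : W i ≤ Hj := hWHj i hj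
      have hrot : proj HW x - proj Hj (proj HW x) ∈ Hjᗮ := sub_proj_mem Hj (proj HW x)
      have hGr0 : proj (W i) (G (proj HW x - proj Hj (proj HW x))) = 0 := by
        apply proj_eq_zero
        rw [Submodule.mem_orthogonal]
        intro u hu
        rw [← hGsa u _, hGeig u (hWiHj hu), inner_smul_left,
          Submodule.inner_right_of_mem_orthogonal (hWiHj hu) hrot, mul_zero]
      have hGsplit : G x = ((aj⁻¹ : ℝ) : ℂ) • proj Hj (proj HW x)
          + G (proj HW x - proj Hj (proj HW x)) := by
        rw [hG0 x]
        rw [← hGeig _ (proj_mem Hj (proj HW x))]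
        rw [← map_add]
        congr 1
        abel
      have hq_eq : proj (W i) (proj Hj (proj HW x)) = proj (W i) x := by
        have h1 : proj (W i) (proj HW x - proj Hj (proj HW x)) = 0 :=
          proj_eq_zero ((Submodule.orthogonal_le hWiHj) hrot)
        have h2 : proj (W i) (x - proj HW x) = 0 :=
          proj_eq_zero ((Submodule.orthogonal_le (hWle i)) (sub_proj_mem HW x))
        rw [map_sub, sub_eq_zero] at h1 h2
        rw [← h1, ← h2]
      rw [hGsplit, map_add, hGr0, add_zero, map_smul, hq_eq, smul_smul]
      congr 1
      push_cast
      field_simp
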